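/- Let p ≥ 1 and q ≥ 0 be integers, τ > p − 1, and for γ > 0 let HD_{γ,τ} denote the set of (ϖ, β) ∈ ℝ^p × ℝ^q such that |k·ϖ + l·β| ≥ γ (|k|^τ + 1)^{−1} for all k ∈ ℤ^p \ {0} and all l ∈ ℤ^q with |l₁| + ⋯ + |l_q| ≤ 2, where |k| is the Euclidean norm. Let B₁ and B_{1/2} denote the closed balls of radii 1 and 1/2 centered at the origin of ℝ^{p+q}, and let φ : B₁ → ℝ^{p+q} be a C¹ map that is a diffeomorphism onto its image. Then there exists γ₀ > 0 such that for every γ ∈ (0, γ₀) the set {ι ∈ B_{1/2} : φ(ι) ∈ HD_{γ,τ}} has positive Lebesgue measure. -/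

import Mathlib

open MeasureTheory Metric
open scoped ENNReal Topology

/-- The Euclidean norm of an integer vector. -/
noncomputable def intNorm {p : ℕ} (k : Fin p → ℤ) : ℝ :=
  Real.sqrt (∑ i, ((k i : ℝ)) ^ 2)

/-- The set of frequency vectors `(ϖ, β) ∈ ℝ^p × ℝ^q` satisfying the
homogeneous Diophantine conditions
`|k·ϖ + l·β| ≥ γ (|k|^τ + 1)⁻¹` for all `k ∈ ℤ^p \ {0}` and all `l ∈ ℤ^q`
with `|l₁| + ⋯ + |l_q| ≤ 2`. -/
def HD (p q : ℕ) (γ τ : ℝ) : Set ((Fin p → ℝ) × (Fin q → ℝ)) :=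
  {x | ∀ k : Fin p → ℤ, k ≠ 0 → ∀ l : Fin q → ℤ, (∑ j, |l j|) ≤ 2 →
    γ * (intNorm k ^ τ + 1)⁻¹ ≤ |(∑ i, (k i : ℝ) * x.1 i) + ∑ j, (l j : ℝ) * x.2 j|}

/-! ### Auxiliary lemmas -/

/-- Sum of a product over a pi type factorizes. -/
lemma tsum_pi_prod {n : ℕ} (g : ℤ → ℝ≥0∞) :
    ∑' k : Fin n → ℤ, ∏ i, g (k i) = (∑' m, g m) ^ n := by
  induction n with
  | zero => simp [tsum_eq_sum (s := Finset.univ) (by simp)]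
  | succ n ih =>
    rw [← (Fin.consEquiv (fun _ : Fin (n+1) => ℤ)).tsum_eq]
    simp only [Fin.consEquiv_apply]
    have h1 : ∀ (c : ℤ × (Fin n → ℤ)),
        ∏ i, g (Fin.cons (α := fun _ : Fin (n+1) => ℤ) c.1 c.2 i) = g c.1 * ∏ i, g (c.2 i) := by
      intro c
      rw [Fin.prod_univ_succ]
      simp
    simp_rw [h1]
    rw [ENNReal.tsum_prod (f := fun (a : ℤ) (b : Fin n → ℤ) => g a * ∏ i, g (b i))]
    simp_rw [ENNReal.tsum_mul_left]
    rw [ENNReal.tsum_mul_right, ih, pow_succ]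
    ring

noncomputable def gE (u : ℝ) : ℤ → ℝ≥0∞ := fun m => ENNReal.ofReal ((max |(m : ℝ)| 1) ^ (-u))

lemma summable_gR {u : ℝ} (hu : 1 < u) : Summable (fun m : ℤ => (max |(m : ℝ)| 1) ^ (-u)) := by
  have h1 : Summable (fun m : ℤ => |(m : ℝ)| ^ (-u)) := Real.summable_abs_int_rpow hu
  have h2 : Summable (fun m : ℤ => if m = 0 then (1 : ℝ) else 0) :=
    (hasSum_ite_eq (0 : ℤ) (1 : ℝ)).summable
  apply Summable.of_nonneg_of_le
    (fun m => Real.rpow_nonneg (le_trans zero_le_one (le_max_right _ _)) _)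
    (fun m => ?_) (h1.add h2)
  by_cases hm : m = 0
  · subst hm
    simp only [if_pos rfl]
    norm_num
    positivity
  · have hmax : max |(m : ℝ)| 1 = |(m : ℝ)| := by
      apply max_eq_left
      rw [← Int.cast_abs]
      exact_mod_cast Int.one_le_abs (by simpa using hm)
    rw [hmax, if_neg hm, add_zero]

lemma tsum_gE_lt_top {u : ℝ} (hu : 1 < u) : ∑' m, gE u m < ⊤ := by
  have hs := summable_gR hu
  unfold gE
  rw [← ENNReal.ofReal_tsum_of_nonneg
    (fun m => Real.rpow_nonneg (le_trans zero_le_one (le_max_right _ _)) _) hs]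
  exact ENNReal.ofReal_lt_top

lemma slab_pi {n : ℕ} (a : Fin (n+1) → ℝ) (i₀ : Fin (n+1)) (ha : a i₀ ≠ 0) (c δ R : ℝ) :
    volume {x : Fin (n+1) → ℝ | |∑ i, a i * x i + c| ≤ δ ∧ ∀ i, x i ∈ Set.Icc (-R) R}
      ≤ ENNReal.ofReal (2 * (δ / |a i₀|)) * ENNReal.ofReal (2 * R) ^ n := by
  set T : Set (ℝ × (Fin n → ℝ)) :=
    {z | |a i₀ * z.1 + (∑ j, a (i₀.succAbove j) * z.2 j + c)| ≤ δ ∧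
      ∀ j, z.2 j ∈ Set.Icc (-R) R} with hTdef
  have hTclosed : IsClosed T := by
    apply IsClosed.inter
    · have : Continuous fun z : ℝ × (Fin n → ℝ) =>
        |a i₀ * z.1 + (∑ j, a (i₀.succAbove j) * z.2 j + c)| := by fun_prop
      exact isClosed_le this continuous_const
    · have : {z : ℝ × (Fin n → ℝ) | ∀ j, z.2 j ∈ Set.Icc (-R) R}
          = ⋂ j, (fun z : ℝ × (Fin n → ℝ) => z.2 j) ⁻¹' Set.Icc (-R) R := by
        ext z; simp
      rw [show (fun z : ℝ × (Fin n → ℝ) => ∀ j, z.2 j ∈ Set.Icc (-R) R)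
          = {z : ℝ × (Fin n → ℝ) | ∀ j, z.2 j ∈ Set.Icc (-R) R} from rfl, this]
      exact isClosed_iInter fun j =>
        (isClosed_Icc).preimage (by fun_prop : Continuous fun z : ℝ × (Fin n → ℝ) => z.2 j)
  have hT : MeasurableSet T := hTclosed.measurableSet
  have mp := measurePreserving_piFinSuccAbove (fun _ : Fin (n+1) => (volume : Measure ℝ)) i₀
  have hsub : {x : Fin (n+1) → ℝ | |∑ i, a i * x i + c| ≤ δ ∧ ∀ i, x i ∈ Set.Icc (-R) R}
      ⊆ (MeasurableEquiv.piFinSuccAbove (fun _ : Fin (n+1) => ℝ) i₀) ⁻¹' T := by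
    intro x hx
    obtain ⟨h1, h2⟩ := hx
    simp only [Set.mem_preimage, MeasurableEquiv.piFinSuccAbove_apply, Fin.insertNthEquiv,
      Equiv.coe_fn_symm_mk, Fin.removeNth, hTdef, Set.mem_setOf_eq]
    constructor
    · rw [show a i₀ * x i₀ + (∑ j, a (i₀.succAbove j) * x (i₀.succAbove j) + c)
        = ∑ i, a i * x i + c by rw [Fin.sum_univ_succAbove (fun i => a i * x i) i₀]; ring]
      exact h1
    · exact fun j => h2 _
  calc volume {x : Fin (n+1) → ℝ | |∑ i, a i * x i + c| ≤ δ ∧ ∀ i, x i ∈ Set.Icc (-R) R}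
      ≤ volume ((MeasurableEquiv.piFinSuccAbove (fun _ : Fin (n+1) => ℝ) i₀) ⁻¹' T) :=
        measure_mono hsub
    _ = ((volume : Measure ℝ).prod (Measure.pi fun _ : Fin n => volume)) T := by
        rw [← mp.measure_preimage hT.nullMeasurableSet]
        rfl
    _ ≤ ENNReal.ofReal (2 * (δ / |a i₀|)) * ENNReal.ofReal (2 * R) ^ n := by
        rw [Measure.prod_apply_symm hT]
        have hsec : ∀ y : Fin n → ℝ,
            volume ((fun t => (t, y)) ⁻¹' T)
              ≤ (Set.univ.pi fun _ : Fin n => Set.Icc (-R) R).indicator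
                  (fun _ => ENNReal.ofReal (2 * (δ / |a i₀|))) y := by
          intro y
          by_cases hy : ∀ j, y j ∈ Set.Icc (-R) R
          · rw [Set.indicator_of_mem ((Set.mem_univ_pi).mpr hy)]
            have : ((fun t => (t, y)) ⁻¹' T)
                ⊆ closedBall (-( (∑ j, a (i₀.succAbove j) * y j + c) / a i₀)) (δ / |a i₀|) := by
              intro t ht
              obtain ⟨h1, -⟩ := ht
              rw [mem_closedBall, Real.dist_eq]
              rw [show t - -((∑ j, a (i₀.succAbove j) * y j + c) / a i₀)
                = (a i₀ * t + (∑ j, a (i₀.succAbove j) * y j + c)) / a i₀ by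
                  field_simp; ring]
              rw [abs_div]
              gcongr
            calc volume ((fun t => (t, y)) ⁻¹' T) ≤ _ := measure_mono this
              _ = ENNReal.ofReal (2 * (δ / |a i₀|)) := by
                  rw [Real.volume_closedBall]
          · have : ((fun t => (t, y)) ⁻¹' T) = ∅ := by
              ext t; simp only [Set.mem_preimage, Set.mem_empty_iff_false, iff_false]
              intro ht; exact hy ht.2
            rw [this]
            simp
        calc ∫⁻ y, volume ((fun t => (t, y)) ⁻¹' T) ∂(Measure.pi fun _ : Fin n => volume)
            ≤ ∫⁻ y, (Set.univ.pi fun _ : Fin n => Set.Icc (-R) R).indicator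
                (fun _ => ENNReal.ofReal (2 * (δ / |a i₀|))) y
                ∂(Measure.pi fun _ : Fin n => volume) := lintegral_mono hsec
          _ = ENNReal.ofReal (2 * (δ / |a i₀|))
              * (Measure.pi fun _ : Fin n => volume) (Set.univ.pi fun _ => Set.Icc (-R) R) := by
              rw [lintegral_indicator (MeasurableSet.univ_pi fun _ => measurableSet_Icc)]
              simp [Measure.restrict_apply]
          _ = ENNReal.ofReal (2 * (δ / |a i₀|)) * ENNReal.ofReal (2 * R) ^ n := by
              congr 1
              rw [Measure.pi_pi]
              simp only [Real.volume_Icc, Finset.prod_const, Finset.card_univ, Fintype.card_fin]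
              congr 2
              ring

lemma slab_prod {n q : ℕ} (a : Fin (n+1) → ℝ) (b : Fin q → ℝ) (i₀ : Fin (n+1))
    (ha : a i₀ ≠ 0) (δ R : ℝ) :
    volume {x : (Fin (n+1) → ℝ) × (Fin q → ℝ) |
        |∑ i, a i * x.1 i + ∑ j, b j * x.2 j| ≤ δ ∧
        (∀ i, x.1 i ∈ Set.Icc (-R) R) ∧ (∀ j, x.2 j ∈ Set.Icc (-R) R)}
      ≤ ENNReal.ofReal (2 * (δ / |a i₀|)) * ENNReal.ofReal (2 * R) ^ (n + q) := by
  set T : Set ((Fin (n+1) → ℝ) × (Fin q → ℝ)) :=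
    {x | |∑ i, a i * x.1 i + ∑ j, b j * x.2 j| ≤ δ ∧
        (∀ i, x.1 i ∈ Set.Icc (-R) R) ∧ (∀ j, x.2 j ∈ Set.Icc (-R) R)} with hTdef
  have hTclosed : IsClosed T := by
    apply IsClosed.inter
    · have : Continuous fun x : (Fin (n+1) → ℝ) × (Fin q → ℝ) =>
        |∑ i, a i * x.1 i + ∑ j, b j * x.2 j| := by fun_prop
      exact isClosed_le this continuous_const
    · apply IsClosed.inter
      · have : {x : (Fin (n+1) → ℝ) × (Fin q → ℝ) | ∀ i, x.1 i ∈ Set.Icc (-R) R}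
            = ⋂ i, (fun x : (Fin (n+1) → ℝ) × (Fin q → ℝ) => x.1 i) ⁻¹' Set.Icc (-R) R := by
          ext x; simp
        rw [show (fun x : (Fin (n+1) → ℝ) × (Fin q → ℝ) => ∀ i, x.1 i ∈ Set.Icc (-R) R)
            = {x : (Fin (n+1) → ℝ) × (Fin q → ℝ) | ∀ i, x.1 i ∈ Set.Icc (-R) R} from rfl, this]
        exact isClosed_iInter fun i => (isClosed_Icc).preimage (by fun_prop)
      · have : {x : (Fin (n+1) → ℝ) × (Fin q → ℝ) | ∀ j, x.2 j ∈ Set.Icc (-R) R}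
            = ⋂ j, (fun x : (Fin (n+1) → ℝ) × (Fin q → ℝ) => x.2 j) ⁻¹' Set.Icc (-R) R := by
          ext x; simp
        rw [show (fun x : (Fin (n+1) → ℝ) × (Fin q → ℝ) => ∀ j, x.2 j ∈ Set.Icc (-R) R)
            = {x : (Fin (n+1) → ℝ) × (Fin q → ℝ) | ∀ j, x.2 j ∈ Set.Icc (-R) R} from rfl, this]
        exact isClosed_iInter fun j => (isClosed_Icc).preimage (by fun_prop)
  have hT : MeasurableSet T := hTclosed.measurableSet
  rw [Measure.volume_eq_prod, Measure.prod_apply_symm hT]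
  have hsec : ∀ y : Fin q → ℝ,
      volume ((fun x1 => (x1, y)) ⁻¹' T)
        ≤ (Set.univ.pi fun _ : Fin q => Set.Icc (-R) R).indicator
            (fun _ => ENNReal.ofReal (2 * (δ / |a i₀|)) * ENNReal.ofReal (2 * R) ^ n) y := by
    intro y
    by_cases hy : ∀ j, y j ∈ Set.Icc (-R) R
    · rw [Set.indicator_of_mem ((Set.mem_univ_pi).mpr hy)]
      have hsub : ((fun x1 => (x1, y)) ⁻¹' T)
          ⊆ {x1 : Fin (n+1) → ℝ | |∑ i, a i * x1 i + ∑ j, b j * y j| ≤ δ ∧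
              ∀ i, x1 i ∈ Set.Icc (-R) R} := by
        intro x1 hx1
        exact ⟨hx1.1, hx1.2.1⟩
      exact (measure_mono hsub).trans (slab_pi a i₀ ha (∑ j, b j * y j) δ R)
    · have : ((fun x1 => (x1, y)) ⁻¹' T) = ∅ := by
        ext x1; simp only [Set.mem_preimage, Set.mem_empty_iff_false, iff_false]
        intro hx1; exact hy hx1.2.2
      rw [this]; simp
  calc ∫⁻ y, volume ((fun x1 => (x1, y)) ⁻¹' T) ∂volume
      ≤ ∫⁻ y, (Set.univ.pi fun _ : Fin q => Set.Icc (-R) R).indicator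
          (fun _ => ENNReal.ofReal (2 * (δ / |a i₀|)) * ENNReal.ofReal (2 * R) ^ n) y
          ∂volume := lintegral_mono hsec
    _ = (ENNReal.ofReal (2 * (δ / |a i₀|)) * ENNReal.ofReal (2 * R) ^ n)
        * volume (Set.univ.pi fun _ : Fin q => Set.Icc (-R) R) := by
        rw [lintegral_indicator (MeasurableSet.univ_pi fun _ => measurableSet_Icc)]
        simp [Measure.restrict_apply]
    _ = ENNReal.ofReal (2 * (δ / |a i₀|)) * ENNReal.ofReal (2 * R) ^ (n + q) := by
        rw [volume_pi_pi]
        have : ∀ _i : ℕ, volume (Set.Icc (-R) R) = ENNReal.ofReal (2 * R) := by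
          intro i
          rw [Real.volume_Icc]
          congr 1
          ring
        simp only [Finset.prod_const, Finset.card_univ, Fintype.card_fin]
        rw [this 0, pow_add, mul_assoc]

lemma key_real {n : ℕ} {τ : ℝ} (hτ0 : 0 ≤ τ) (k : Fin (n+1) → ℤ) (i₀ : Fin (n+1))
    (hmax : ∀ i, |(k i : ℝ)| ≤ |(k i₀ : ℝ)|) (hk0 : k i₀ ≠ 0) {γ : ℝ} (hγ : 0 ≤ γ) :
    γ * (intNorm k ^ τ + 1)⁻¹ / |(k i₀ : ℝ)|
      ≤ γ * ∏ i, (max |(k i : ℝ)| 1) ^ (-((τ+1)/(n+1))) := by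
  set u : ℝ := (τ+1)/(n+1) with hu
  set M : ℝ := |(k i₀ : ℝ)| with hM
  have hM1 : 1 ≤ M := by
    rw [hM, ← Int.cast_abs]
    exact_mod_cast Int.one_le_abs hk0
  have hMpos : 0 < M := lt_of_lt_of_le one_pos hM1
  have hin : M ≤ intNorm k := by
    rw [hM, intNorm, ← Real.sqrt_sq_eq_abs]
    apply Real.sqrt_le_sqrt
    exact Finset.single_le_sum (f := fun i => ((k i : ℝ))^2) (fun i _ => sq_nonneg _)
      (Finset.mem_univ i₀)
  have h2 : M ^ τ ≤ intNorm k ^ τ + 1 :=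
    le_add_of_le_of_nonneg (Real.rpow_le_rpow hMpos.le hin hτ0) one_pos.le
  have hMτpos : (0:ℝ) < M ^ τ := Real.rpow_pos_of_pos hMpos _
  have h3 : (intNorm k ^ τ + 1)⁻¹ ≤ (M ^ τ)⁻¹ := by
    apply inv_anti₀ hMτpos h2
  have h4 : ∏ i, max |(k i : ℝ)| 1 ≤ M ^ (n+1 : ℕ) := by
    have h := Finset.prod_le_prod (s := Finset.univ)
      (f := fun i : Fin (n+1) => max |(k i : ℝ)| 1) (g := fun _ => M)
      (fun i _ => le_trans zero_le_one (le_max_right _ _))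
      (fun i _ => max_le (hmax i) hM1)
    simpa using h
  have hprodpos : (0:ℝ) < ∏ i, max |(k i : ℝ)| 1 :=
    Finset.prod_pos fun i _ => lt_of_lt_of_le one_pos (le_max_right _ _)
  have hupos : 0 < u := by
    rw [hu]; positivity
  have h5 : (∏ i, max |(k i : ℝ)| 1) ^ u ≤ M ^ (τ + 1) := by
    calc (∏ i, max |(k i : ℝ)| 1) ^ u ≤ (M ^ (n+1 : ℕ)) ^ u :=
          Real.rpow_le_rpow hprodpos.le h4 hupos.le
      _ = M ^ ((n+1 : ℕ) * u) := by
          rw [← Real.rpow_natCast M (n+1), ← Real.rpow_mul hMpos.le]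
      _ = M ^ (τ + 1) := by
          congr 1
          rw [hu]
          field_simp
          norm_num
  have h6 : (M ^ (τ + 1))⁻¹ ≤ ((∏ i, max |(k i : ℝ)| 1) ^ u)⁻¹ :=
    inv_anti₀ (Real.rpow_pos_of_pos hprodpos _) h5
  have h7 : ((∏ i, max |(k i : ℝ)| 1) ^ u)⁻¹ = ∏ i, (max |(k i : ℝ)| 1) ^ (-u) := by
    rw [← Real.finset_prod_rpow _ _ (fun i _ => le_trans zero_le_one (le_max_right _ _)) u,
      ← Finset.prod_inv_distrib]
    apply Finset.prod_congr rfl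
    intro i _
    rw [Real.rpow_neg (le_trans zero_le_one (le_max_right _ _))]
  calc γ * (intNorm k ^ τ + 1)⁻¹ / M = γ * ((intNorm k ^ τ + 1)⁻¹ / M) := by ring
    _ ≤ γ * ((M ^ τ)⁻¹ / M) := by
        gcongr
    _ = γ * (M ^ (τ + 1))⁻¹ := by
        rw [Real.rpow_add_one hMpos.ne']
        rw [mul_inv]
        ring
    _ ≤ γ * ∏ i, (max |(k i : ℝ)| 1) ^ (-u) := by
        rw [← h7]
        exact mul_le_mul_of_nonneg_left h6 hγ

lemma tsum_split {A B : Type*} [Countable A] [Countable B] (F : A → ℝ≥0∞) (G : B → ℝ≥0∞) :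
    ∑' σ : A × B, F σ.1 * G σ.2 = (∑' a, F a) * (∑' b, G b) := by
  calc ∑' σ : A × B, F σ.1 * G σ.2
      = ∑' (a : A) (b : B), F a * G b := ENNReal.tsum_prod (f := fun a b => F a * G b)
    _ = ∑' (a : A), F a * ∑' (b : B), G b := by simp_rw [ENNReal.tsum_mul_left]
    _ = (∑' a, F a) * ∑' b, G b := ENNReal.tsum_mul_right

lemma bad_bound {n q : ℕ} {τ : ℝ} (hτ : (n : ℝ) < τ) (R : ℝ) :
    ∃ C : ℝ≥0∞, C ≠ ⊤ ∧ ∀ γ : ℝ, 0 < γ →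
      volume ({x : (Fin (n+1) → ℝ) × (Fin q → ℝ) |
          (∀ i, x.1 i ∈ Set.Icc (-R) R) ∧ (∀ j, x.2 j ∈ Set.Icc (-R) R)} \ HD (n+1) q γ τ)
        ≤ ENNReal.ofReal γ * C := by
  have hτ0 : (0:ℝ) ≤ τ := le_trans (Nat.cast_nonneg n) hτ.le
  set u : ℝ := (τ+1)/(n+1) with hu
  have hu1 : 1 < u := by
    rw [hu, lt_div_iff₀ (by positivity)]
    linarith
  set Tg : ℝ≥0∞ := ∑' m, gE u m with hTg
  have hTgne : Tg ≠ ⊤ := (tsum_gE_lt_top hu1).ne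
  set L : Set (Fin q → ℤ) := Set.univ.pi fun _ => Set.Icc (-2 : ℤ) 2 with hL
  have hLfin : L.Finite := Set.Finite.pi fun _ => Set.finite_Icc _ _
  set W : ℝ≥0∞ := ∑' l : Fin q → ℤ, L.indicator (fun _ => (1:ℝ≥0∞)) l with hW
  have hWne : W ≠ ⊤ := by
    haveI := hLfin.fintype
    rw [hW, ← tsum_subtype L (fun _ => (1:ℝ≥0∞)), tsum_fintype]
    simp only [Finset.sum_const, nsmul_eq_mul, mul_one]
    exact ENNReal.natCast_ne_top _
  refine ⟨ENNReal.ofReal 2 * ENNReal.ofReal (2*R) ^ (n + q) * (Tg ^ (n+1) * W), ?_, ?_⟩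
  · exact ENNReal.mul_ne_top (ENNReal.mul_ne_top ENNReal.ofReal_ne_top
      (ENNReal.pow_ne_top ENNReal.ofReal_ne_top))
      (ENNReal.mul_ne_top (ENNReal.pow_ne_top hTgne) hWne)
  intro γ hγ
  set Slab : (Fin (n+1) → ℤ) × (Fin q → ℤ) → Set ((Fin (n+1) → ℝ) × (Fin q → ℝ)) :=
    fun σ => {x | (σ.1 ≠ 0 ∧ (∑ j, |σ.2 j|) ≤ 2) ∧
      |∑ i, (σ.1 i : ℝ) * x.1 i + ∑ j, (σ.2 j : ℝ) * x.2 j|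
        ≤ γ * (intNorm σ.1 ^ τ + 1)⁻¹ ∧
      (∀ i, x.1 i ∈ Set.Icc (-R) R) ∧ (∀ j, x.2 j ∈ Set.Icc (-R) R)} with hSlab
  have hcover : {x : (Fin (n+1) → ℝ) × (Fin q → ℝ) |
      (∀ i, x.1 i ∈ Set.Icc (-R) R) ∧ (∀ j, x.2 j ∈ Set.Icc (-R) R)} \ HD (n+1) q γ τ
      ⊆ ⋃ σ, Slab σ := by
    intro x hx
    obtain ⟨hbox, hnot⟩ := hx
    rw [HD, Set.mem_setOf_eq] at hnot
    push_neg at hnot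
    obtain ⟨k, hk0, l, hl, hlt⟩ := hnot
    refine Set.mem_iUnion.mpr ⟨(k, l), ⟨⟨hk0, hl⟩, hlt.le, hbox.1, hbox.2⟩⟩
  have hB : ∀ σ, volume (Slab σ)
      ≤ (ENNReal.ofReal γ * ENNReal.ofReal 2 * ENNReal.ofReal (2*R) ^ (n + q))
        * ((∏ i, gE u (σ.1 i)) * L.indicator (fun _ => (1:ℝ≥0∞)) σ.2) := by
    intro σ
    by_cases hcond : σ.1 ≠ 0 ∧ (∑ j, |σ.2 j|) ≤ 2
    · obtain ⟨hk0, hl2⟩ := hcond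
      obtain ⟨i₀, -, hi₀⟩ := Finset.exists_max_image Finset.univ
        (fun i => |(σ.1 i : ℝ)|) ⟨0, Finset.mem_univ 0⟩
      have hmax : ∀ i, |(σ.1 i : ℝ)| ≤ |(σ.1 i₀ : ℝ)| := fun i => hi₀ i (Finset.mem_univ i)
      have hki₀ : σ.1 i₀ ≠ 0 := by
        intro h0
        apply hk0
        funext i
        have := hmax i
        rw [h0] at this
        simpa using this
      have hane : ((σ.1 i₀ : ℝ)) ≠ 0 := by exact_mod_cast hki₀
      have hsub : Slab σ ⊆ {x : (Fin (n+1) → ℝ) × (Fin q → ℝ) |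
          |∑ i, (σ.1 i : ℝ) * x.1 i + ∑ j, (σ.2 j : ℝ) * x.2 j|
            ≤ γ * (intNorm σ.1 ^ τ + 1)⁻¹ ∧
          (∀ i, x.1 i ∈ Set.Icc (-R) R) ∧ (∀ j, x.2 j ∈ Set.Icc (-R) R)} :=
        fun x hx => hx.2
      have h1 := (measure_mono hsub).trans
        (slab_prod (fun i => (σ.1 i : ℝ)) (fun j => (σ.2 j : ℝ)) i₀ hane
          (γ * (intNorm σ.1 ^ τ + 1)⁻¹) R)
      have h2 : 2 * (γ * (intNorm σ.1 ^ τ + 1)⁻¹ / |(σ.1 i₀ : ℝ)|)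
          ≤ 2 * (γ * ∏ i, (max |(σ.1 i : ℝ)| 1) ^ (-u)) := by
        have := key_real hτ0 σ.1 i₀ hmax hki₀ hγ.le
        linarith
      have hmem : σ.2 ∈ L := by
        rw [hL]
        intro j _
        have h1j : |σ.2 j| ≤ 2 := le_trans (Finset.single_le_sum
          (f := fun j => |σ.2 j|) (fun j _ => abs_nonneg _) (Finset.mem_univ j)) hl2
        rw [Set.mem_Icc]
        exact abs_le.mp h1j
      rw [Set.indicator_of_mem hmem, mul_one]
      calc volume (Slab σ)
          ≤ ENNReal.ofReal (2 * (γ * (intNorm σ.1 ^ τ + 1)⁻¹ / |(σ.1 i₀ : ℝ)|))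
            * ENNReal.ofReal (2*R) ^ (n + q) := h1
        _ ≤ ENNReal.ofReal (2 * (γ * ∏ i, (max |(σ.1 i : ℝ)| 1) ^ (-u)))
            * ENNReal.ofReal (2*R) ^ (n + q) := by
            exact mul_le_mul_left (ENNReal.ofReal_le_ofReal h2) _
        _ = (ENNReal.ofReal γ * ENNReal.ofReal 2 * ENNReal.ofReal (2*R) ^ (n + q))
            * ∏ i, gE u (σ.1 i) := by
            have hprodnn : (0:ℝ) ≤ ∏ i, (max |(σ.1 i : ℝ)| 1) ^ (-u) :=
              Finset.prod_nonneg fun i _ => Real.rpow_nonneg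
                (le_trans zero_le_one (le_max_right _ _)) _
            rw [ENNReal.ofReal_mul (by norm_num), ENNReal.ofReal_mul hγ.le]
            rw [ENNReal.ofReal_prod_of_nonneg
              (fun i _ => Real.rpow_nonneg (le_trans zero_le_one (le_max_right _ _)) _)]
            simp only [gE]
            ring
    · have : Slab σ = ∅ := by
        ext x
        simp only [hSlab, Set.mem_setOf_eq, Set.mem_empty_iff_false, iff_false]
        intro hx
        exact hcond hx.1
      rw [this]
      simp
  calc volume ({x : (Fin (n+1) → ℝ) × (Fin q → ℝ) |
        (∀ i, x.1 i ∈ Set.Icc (-R) R) ∧ (∀ j, x.2 j ∈ Set.Icc (-R) R)} \ HD (n+1) q γ τ)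
      ≤ volume (⋃ σ, Slab σ) := measure_mono hcover
    _ ≤ ∑' σ, volume (Slab σ) := measure_iUnion_le _
    _ ≤ ∑' σ : (Fin (n+1) → ℤ) × (Fin q → ℤ),
        (ENNReal.ofReal γ * ENNReal.ofReal 2 * ENNReal.ofReal (2*R) ^ (n + q))
        * ((∏ i, gE u (σ.1 i)) * L.indicator (fun _ => (1:ℝ≥0∞)) σ.2) :=
        ENNReal.tsum_le_tsum hB
    _ = (ENNReal.ofReal γ * ENNReal.ofReal 2 * ENNReal.ofReal (2*R) ^ (n + q))
        * (Tg ^ (n+1) * W) := by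
        rw [ENNReal.tsum_mul_left]
        congr 1
        rw [tsum_split (fun k : Fin (n+1) → ℤ => ∏ i, gE u (k i))
          (fun l : Fin q → ℤ => L.indicator (fun _ => (1:ℝ≥0∞)) l), tsum_pi_prod]
    _ = ENNReal.ofReal γ
        * (ENNReal.ofReal 2 * ENNReal.ofReal (2*R) ^ (n + q) * (Tg ^ (n+1) * W)) := by
        ring

lemma hd_closed (p q : ℕ) (γ τ : ℝ) : IsClosed (HD p q γ τ) := by
  have heq : HD p q γ τ = ⋂ (k : Fin p → ℤ) (l : Fin q → ℤ),
      {x : (Fin p → ℝ) × (Fin q → ℝ) | k ≠ 0 → (∑ j, |l j|) ≤ 2 →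
        γ * (intNorm k ^ τ + 1)⁻¹ ≤ |(∑ i, (k i : ℝ) * x.1 i) + ∑ j, (l j : ℝ) * x.2 j|} := by
    ext x
    simp only [HD, Set.mem_setOf_eq, Set.mem_iInter]
    tauto
  rw [heq]
  apply isClosed_iInter; intro k
  apply isClosed_iInter; intro l
  by_cases hk : k ≠ 0
  · by_cases hl : (∑ j, |l j|) ≤ 2
    · have : {x : (Fin p → ℝ) × (Fin q → ℝ) | k ≠ 0 → (∑ j, |l j|) ≤ 2 →
          γ * (intNorm k ^ τ + 1)⁻¹ ≤ |(∑ i, (k i : ℝ) * x.1 i) + ∑ j, (l j : ℝ) * x.2 j|}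
          = {x : (Fin p → ℝ) × (Fin q → ℝ) |
            γ * (intNorm k ^ τ + 1)⁻¹ ≤ |(∑ i, (k i : ℝ) * x.1 i) + ∑ j, (l j : ℝ) * x.2 j|} := by
        ext x; simp [hk, hl]
      rw [this]
      exact isClosed_le continuous_const (by fun_prop)
    · have : {x : (Fin p → ℝ) × (Fin q → ℝ) | k ≠ 0 → (∑ j, |l j|) ≤ 2 →
          γ * (intNorm k ^ τ + 1)⁻¹ ≤ |(∑ i, (k i : ℝ) * x.1 i) + ∑ j, (l j : ℝ) * x.2 j|}
          = Set.univ := by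
        ext x; simp [hl]
      rw [this]; exact isClosed_univ
  · have : {x : (Fin p → ℝ) × (Fin q → ℝ) | k ≠ 0 → (∑ j, |l j|) ≤ 2 →
        γ * (intNorm k ^ τ + 1)⁻¹ ≤ |(∑ i, (k i : ℝ) * x.1 i) + ∑ j, (l j : ℝ) * x.2 j|}
        = Set.univ := by
      ext x; simp [hk]
    rw [this]; exact isClosed_univ

lemma cle_preimage_null {E F : Type*} [NormedAddCommGroup E] [NormedSpace ℝ E]
    [MeasurableSpace E] [BorelSpace E] [FiniteDimensional ℝ E]
    [NormedAddCommGroup F] [NormedSpace ℝ F] [MeasurableSpace F] [BorelSpace F]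
    [FiniteDimensional ℝ F]
    (μ : Measure E) (ν : Measure F) [μ.IsAddHaarMeasure] [ν.IsAddHaarMeasure]
    (e : E ≃L[ℝ] F) {A : Set F} (hA : MeasurableSet A) (h0 : ν A = 0) :
    μ (⇑e ⁻¹' A) = 0 := by
  have hHaar : (μ.map ⇑e).IsAddHaarMeasure :=
    AddEquiv.isAddHaarMeasure_map μ (e.toLinearEquiv.toAddEquiv) e.continuous e.symm.continuous
  have heq := Measure.isAddLeftInvariant_eq_smul (μ.map ⇑e) ν
  have hmap : μ.map ⇑e A = 0 := by
    rw [heq]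
    simp [h0]
  rwa [Measure.map_apply e.continuous.measurable hA] at hmap

/-- Iso-chronic KAM measure estimate: if the frequency map `φ` is a `C¹`
diffeomorphism of the closed unit ball of `ℝ^{p+q}` onto its image, then for
all sufficiently small `γ > 0` the set of parameters `ι` in the ball of radius
`1/2` whose frequencies `φ(ι)` satisfy the Diophantine conditions `HD_{γ,τ}`
has positive Lebesgue measure. -/
theorem hd_pullback_positive_measure (p q : ℕ) (hp : 1 ≤ p) (τ : ℝ)
    (hτ : (p : ℝ) - 1 < τ)
    (φ : EuclideanSpace ℝ (Fin (p + q)) → (Fin p → ℝ) × (Fin q → ℝ))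
    (hφ : ContDiffOn ℝ 1 φ (closedBall 0 1))
    (hinj : Set.InjOn φ (closedBall 0 1))
    (hder : ∀ x ∈ closedBall (0 : EuclideanSpace ℝ (Fin (p + q))) 1,
      Function.Bijective (fderivWithin ℝ φ (closedBall 0 1) x)) :
    ∃ γ₀ : ℝ, 0 < γ₀ ∧ ∀ γ ∈ Set.Ioo (0 : ℝ) γ₀,
      0 < volume {ι ∈ closedBall (0 : EuclideanSpace ℝ (Fin (p + q))) (1 / 2) |
        φ ι ∈ HD p q γ τ} := by
  obtain ⟨n, rfl⟩ : ∃ n, p = n + 1 := ⟨p - 1, (Nat.succ_pred_eq_of_pos hp).symm⟩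
  have hτ' : (n : ℝ) < τ := by
    push_cast at hτ
    linarith
  -- the continuous linear equivalence between the product space and Euclidean space
  let lE : (EuclideanSpace ℝ (Fin (n + 1 + q))) ≃ₗ[ℝ] (Fin (n+1+q) → ℝ) := WithLp.linearEquiv 2 ℝ _
  let l1 : (Fin (n+1+q) → ℝ) ≃ₗ[ℝ] (Fin (n+1) ⊕ Fin q → ℝ) :=
    LinearEquiv.funCongrLeft ℝ ℝ finSumFinEquiv
  let l2 : (Fin (n+1) ⊕ Fin q → ℝ) ≃ₗ[ℝ] ((Fin (n+1) → ℝ) × (Fin q → ℝ)) :=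
    LinearEquiv.sumArrowLequivProdArrow _ _ ℝ ℝ
  let c : ((Fin (n+1) → ℝ) × (Fin q → ℝ)) ≃L[ℝ] (EuclideanSpace ℝ (Fin (n + 1 + q))) := ((lE.trans l1).trans l2).symm.toContinuousLinearEquiv
  -- openness of the image of the small ball
  have h0mem : (0 : (EuclideanSpace ℝ (Fin (n + 1 + q)))) ∈ closedBall (0 : (EuclideanSpace ℝ (Fin (n + 1 + q)))) 1 := mem_closedBall_self one_pos.le
  have hnhds : closedBall (0 : (EuclideanSpace ℝ (Fin (n + 1 + q)))) 1 ∈ 𝓝 (0 : (EuclideanSpace ℝ (Fin (n + 1 + q)))) := closedBall_mem_nhds 0 one_pos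
  have hca : ContDiffAt ℝ 1 φ 0 := hφ.contDiffAt hnhds
  have hfd : fderivWithin ℝ φ (closedBall 0 1) 0 = fderiv ℝ φ 0 :=
    fderivWithin_of_mem_nhds hnhds
  have hbij : Function.Bijective (fderiv ℝ φ 0) := by
    rw [← hfd]
    exact hder 0 h0mem
  let d : (EuclideanSpace ℝ (Fin (n + 1 + q))) ≃L[ℝ] ((Fin (n+1) → ℝ) × (Fin q → ℝ)) :=
    (LinearEquiv.ofBijective ((fderiv ℝ φ 0).toLinearMap) hbij).toContinuousLinearEquiv
  have hdcoe : (d : (EuclideanSpace ℝ (Fin (n + 1 + q))) →L[ℝ] ((Fin (n+1) → ℝ) × (Fin q → ℝ))) = fderiv ℝ φ 0 := by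
    apply ContinuousLinearMap.ext
    intro x
    rfl
  have hsd : HasStrictFDerivAt φ (d : (EuclideanSpace ℝ (Fin (n + 1 + q))) →L[ℝ] ((Fin (n+1) → ℝ) × (Fin q → ℝ))) 0 := by
    rw [hdcoe]
    exact hca.hasStrictFDerivAt one_ne_zero
  have hmap : Filter.map φ (𝓝 0) = 𝓝 (φ 0) := hsd.map_nhds_eq_of_equiv
  have himg : φ '' (ball (0:(EuclideanSpace ℝ (Fin (n + 1 + q)))) (1/2)) ∈ 𝓝 (φ 0) := by
    rw [← hmap]
    exact Filter.image_mem_map (ball_mem_nhds 0 (by norm_num))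
  obtain ⟨r, hrpos, hrsub⟩ := Metric.mem_nhds_iff.mp himg
  -- the box bound
  set R : ℝ := ‖φ 0‖ + r with hR
  have hball_box : ball (φ 0) r ⊆ {x : ((Fin (n+1) → ℝ) × (Fin q → ℝ)) |
      (∀ i, x.1 i ∈ Set.Icc (-R) R) ∧ (∀ j, x.2 j ∈ Set.Icc (-R) R)} := by
    intro x hx
    rw [mem_ball, dist_eq_norm] at hx
    constructor
    · intro i
      rw [Set.mem_Icc, ← abs_le, ← Real.norm_eq_abs]
      have h1 : ‖x.1 i - (φ 0).1 i‖ ≤ ‖x - φ 0‖ :=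
        (norm_le_pi_norm (x.1 - (φ 0).1) i).trans (norm_fst_le (x - φ 0))
      have h2 : ‖(φ 0).1 i‖ ≤ ‖φ 0‖ := (norm_le_pi_norm ((φ 0).1) i).trans (norm_fst_le (φ 0))
      calc ‖x.1 i‖ = ‖(x.1 i - (φ 0).1 i) + (φ 0).1 i‖ := by congr 1; ring
        _ ≤ ‖x.1 i - (φ 0).1 i‖ + ‖(φ 0).1 i‖ := norm_add_le _ _
        _ ≤ R := by rw [hR]; linarith
    · intro j
      rw [Set.mem_Icc, ← abs_le, ← Real.norm_eq_abs]
      have h1 : ‖x.2 j - (φ 0).2 j‖ ≤ ‖x - φ 0‖ :=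
        (norm_le_pi_norm (x.2 - (φ 0).2) j).trans (norm_snd_le (x - φ 0))
      have h2 : ‖(φ 0).2 j‖ ≤ ‖φ 0‖ := (norm_le_pi_norm ((φ 0).2) j).trans (norm_snd_le (φ 0))
      calc ‖x.2 j‖ = ‖(x.2 j - (φ 0).2 j) + (φ 0).2 j‖ := by congr 1; ring
        _ ≤ ‖x.2 j - (φ 0).2 j‖ + ‖(φ 0).2 j‖ := norm_add_le _ _
        _ ≤ R := by rw [hR]; linarith
  -- measure of the ball in the product space
  haveI hPHaar : (volume : Measure ((Fin (n+1) → ℝ) × (Fin q → ℝ))).IsAddHaarMeasure := by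
    rw [Measure.volume_eq_prod]; exact Measure.prod.instIsAddHaarMeasure _ _
  set b : ℝ≥0∞ := volume (ball (φ 0) r) with hb
  have hbpos : 0 < b := measure_ball_pos volume _ hrpos
  have hbne : b ≠ ⊤ := measure_ball_lt_top.ne
  obtain ⟨C, hCne, hC⟩ := bad_bound (q := q) hτ' R
  set C' : ℝ≥0∞ := max C 1 with hC'
  have hC'ne : C' ≠ ⊤ := by
    rw [hC']
    simp [hCne]
  have hC'0 : C' ≠ 0 := by
    rw [hC']
    simp
  set γ₀ : ℝ := (b / 2 / C').toReal with hγ₀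
  have hb2ne : b / 2 ≠ ⊤ := (ENNReal.div_lt_top hbne (by norm_num)).ne
  have hb20 : b / 2 ≠ 0 := by
    simp only [ne_eq, ENNReal.div_eq_zero_iff, not_or]
    exact ⟨hbpos.ne', by norm_num⟩
  have hdivne : b / 2 / C' ≠ ⊤ := (ENNReal.div_lt_top hb2ne hC'0).ne
  have hdiv0 : b / 2 / C' ≠ 0 := by
    simp only [ne_eq, ENNReal.div_eq_zero_iff, not_or]
    exact ⟨⟨hbpos.ne', by norm_num⟩, hC'ne⟩
  have hγ₀pos : 0 < γ₀ := ENNReal.toReal_pos hdiv0 hdivne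
  refine ⟨γ₀, hγ₀pos, ?_⟩
  intro γ hγ
  obtain ⟨hγpos, hγlt⟩ := hγ
  -- the bad set bound beats the ball measure
  have hbadlt : ENNReal.ofReal γ * C' < b := by
    have h1 : ENNReal.ofReal γ < b / 2 / C' := by
      rw [← ENNReal.ofReal_toReal hdivne]
      exact ENNReal.ofReal_lt_ofReal_iff_of_nonneg hγpos.le |>.mpr hγlt
    calc ENNReal.ofReal γ * C' < (b / 2 / C') * C' := by
          exact ENNReal.mul_lt_mul_left hC'0 hC'ne h1
      _ = b / 2 := ENNReal.div_mul_cancel hC'0 hC'ne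
      _ < b := ENNReal.half_lt_self hbpos.ne' hbne
  have hHDmeas : MeasurableSet (HD (n+1) q γ τ) := (hd_closed _ _ _ _).measurableSet
  -- positivity of ball ∩ HD
  have hposint : 0 < volume (ball (φ 0) r ∩ HD (n+1) q γ τ) := by
    rw [pos_iff_ne_zero]
    intro hzero
    have hsplit : b ≤ volume (ball (φ 0) r ∩ HD (n+1) q γ τ)
        + volume (ball (φ 0) r \ HD (n+1) q γ τ) := by
      rw [hb]
      conv_lhs => rw [← Set.inter_union_diff (ball (φ 0) r) (HD (n+1) q γ τ)]
      exact measure_union_le _ _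
    have hdiffle : volume (ball (φ 0) r \ HD (n+1) q γ τ) ≤ ENNReal.ofReal γ * C' := by
      calc volume (ball (φ 0) r \ HD (n+1) q γ τ)
          ≤ volume ({x : ((Fin (n+1) → ℝ) × (Fin q → ℝ)) | (∀ i, x.1 i ∈ Set.Icc (-R) R)
              ∧ (∀ j, x.2 j ∈ Set.Icc (-R) R)} \ HD (n+1) q γ τ) :=
            measure_mono (Set.diff_subset_diff_left hball_box)
        _ ≤ ENNReal.ofReal γ * C := hC γ hγpos
        _ ≤ ENNReal.ofReal γ * C' := by
            gcongr
            rw [hC']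
            exact le_max_left _ _
    have : b < b := by
      calc b ≤ volume (ball (φ 0) r ∩ HD (n+1) q γ τ)
            + volume (ball (φ 0) r \ HD (n+1) q γ τ) := hsplit
        _ = volume (ball (φ 0) r \ HD (n+1) q γ τ) := by rw [hzero, zero_add]
        _ ≤ ENNReal.ofReal γ * C' := hdiffle
        _ < b := hbadlt
    exact lt_irrefl _ this
  -- the good set
  set Good : Set (EuclideanSpace ℝ (Fin (n + 1 + q))) := {ι ∈ closedBall (0 : (EuclideanSpace ℝ (Fin (n + 1 + q)))) (1 / 2) | φ ι ∈ HD (n+1) q γ τ} with hGood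
  have hGoodeq : Good = closedBall (0 : (EuclideanSpace ℝ (Fin (n + 1 + q)))) (1/2) ∩ φ ⁻¹' (HD (n+1) q γ τ) := by
    ext x
    simp [hGood, Set.mem_sep_iff]
  have hhalfsub : closedBall (0 : (EuclideanSpace ℝ (Fin (n + 1 + q)))) (1/2) ⊆ closedBall (0 : (EuclideanSpace ℝ (Fin (n + 1 + q)))) 1 :=
    closedBall_subset_closedBall (by norm_num)
  have hGoodsub : Good ⊆ closedBall (0 : (EuclideanSpace ℝ (Fin (n + 1 + q)))) 1 := by
    rw [hGoodeq]
    exact (Set.inter_subset_left).trans hhalfsub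
  have hGoodclosed : IsClosed Good := by
    rw [hGoodeq, show closedBall (0 : (EuclideanSpace ℝ (Fin (n + 1 + q)))) (1/2) ∩ φ ⁻¹' (HD (n+1) q γ τ)
        = closedBall (0 : (EuclideanSpace ℝ (Fin (n + 1 + q)))) (1/2) ∩ (closedBall (0 : (EuclideanSpace ℝ (Fin (n + 1 + q)))) 1 ∩ φ ⁻¹' (HD (n+1) q γ τ)) by
      rw [← Set.inter_assoc, Set.inter_eq_self_of_subset_left hhalfsub]]
    exact (Metric.isClosed_closedBall).inter
      (hφ.continuousOn.preimage_isClosed_of_isClosed Metric.isClosed_closedBall (hd_closed _ _ _ _))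
  have hGoodcompact : IsCompact Good :=
    (isCompact_closedBall _ _).of_isClosed_subset hGoodclosed hGoodsub
  have hGoodmeas : MeasurableSet Good := hGoodclosed.measurableSet
  rw [pos_iff_ne_zero]
  intro hzero
  -- change of variables: the image of the (null) good set is null
  set ψ : (EuclideanSpace ℝ (Fin (n + 1 + q))) → (EuclideanSpace ℝ (Fin (n + 1 + q))) := fun x => c (φ x) with hψ
  have hψderiv : ∀ x ∈ Good, HasFDerivWithinAt ψ
      ((c : ((Fin (n+1) → ℝ) × (Fin q → ℝ)) →L[ℝ] (EuclideanSpace ℝ (Fin (n + 1 + q)))).comp (fderivWithin ℝ φ (closedBall 0 1) x)) Good x := by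
    intro x hx
    have h1 : HasFDerivWithinAt φ (fderivWithin ℝ φ (closedBall 0 1) x) Good x :=
      ((hφ.differentiableOn one_ne_zero x (hGoodsub hx)).hasFDerivWithinAt).mono hGoodsub
    exact (c.toContinuousLinearMap.hasFDerivAt.comp_hasFDerivWithinAt x h1)
  have hψimg0 : volume (ψ '' Good) = 0 := by
    have hle := addHaar_image_le_lintegral_abs_det_fderiv volume hGoodmeas hψderiv
    rw [setLIntegral_measure_zero _ _ hzero] at hle
    exact le_antisymm hle zero_le
  have hψmeas : MeasurableSet (ψ '' Good) := by
    have : IsCompact (ψ '' Good) := hGoodcompact.image_of_continuousOn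
      (c.continuous.comp_continuousOn (hφ.continuousOn.mono hGoodsub))
    exact this.isClosed.measurableSet
  have hφimg0 : volume (φ '' Good) = 0 := by
    have hnull := cle_preimage_null volume volume c hψmeas hψimg0
    apply le_antisymm _ zero_le
    rw [← hnull]
    apply measure_mono
    intro y hy
    obtain ⟨x, hx, rfl⟩ := hy
    exact ⟨x, hx, rfl⟩
  -- but the image contains ball ∩ HD
  have hsub2 : ball (φ 0) r ∩ HD (n+1) q γ τ ⊆ φ '' Good := by
    rw [hGoodeq, Set.image_inter_preimage]
    apply Set.inter_subset_inter_left
    refine hrsub.trans ?_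
    apply Set.image_mono
    exact ball_subset_closedBall
  have : (0:ℝ≥0∞) < 0 := by
    calc (0:ℝ≥0∞) < volume (ball (φ 0) r ∩ HD (n+1) q γ τ) := hposint
      _ ≤ volume (φ '' Good) := measure_mono hsub2
      _ = 0 := hφimg0
  exact lt_irrefl _ this
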